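/- Let G : ℝ × ℝ → ℝ be twice continuously differentiable in a neighbourhood of (x*, p*), with G(x*, p*) = 0 and ∂G/∂x (x*, p*) = 0. Assume ∂G/∂p (x*, p*) ≠ 0, ∂²G/∂x² (x*, p*) ≠ 0, and ∂G/∂p (x*, p*) · ∂²G/∂x² (x*, p*) > 0. Then there exist ε > 0 and δ > 0 such that for every p with p* < p < p* + δ the equation G(x, p) = 0 has no solution x with |x − x*| < ε, while for every p with p* − δ < p < p* it has exactly two solutions x with |x − x*| < ε. -/

import Mathlib

open Set Metric Filter
set_option maxHeartbeats 1600000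

private lemma saddle_arith_pos (a c M t v GG Gp0 Fx : ℝ) (ha : 0 < a) (hc : 0 < c) (ht : 0 < t)
    (htb : Gp0 + Fx * v + c / 2 * v ^ 2 ≤ GG)
    (hpl : a / 2 * t < Gp0)
    (h1 : -(M * t * |v|) ≤ Fx * v)
    (hM2 : M ^ 2 * t ≤ a * c / 2) : 0 < GG := by
  have hsq : v ^ 2 = |v| ^ 2 := (sq_abs v).symm
  have k1 : a / 2 * t - M * t * |v| + c / 2 * |v| ^ 2 < GG := by
    rw [hsq] at htb; linarith
  have k2 : 0 ≤ 2 * c * (a / 2 * t - M * t * |v| + c / 2 * |v| ^ 2) := by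
    nlinarith [sq_nonneg (c * |v| - M * t), mul_le_mul_of_nonneg_right hM2 ht.le,
      mul_nonneg (mul_nonneg ha.le hc.le) ht.le]
  have k3 : 0 ≤ a / 2 * t - M * t * |v| + c / 2 * |v| ^ 2 := by nlinarith [k2, hc]
  linarith

private lemma saddle_arith_endpoint (a c M r t δ Gp0 Fx GG v : ℝ)
    (hvr : |v| = r)
    (hc : 0 < c) (ht : 0 < t) (htδ : t ≤ δ) (hr : 0 < r) (hM0 : 0 < M) (ha : 0 < a)
    (htb : Gp0 + Fx * v + c / 2 * v ^ 2 ≤ GG)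
    (hlow : -(2 * a * t) < Gp0)
    (hlip : |Fx| ≤ M * t)
    (hδ3' : δ * (2 * a + M * r) ≤ c * r ^ 2 / 4) : 0 < GG := by
  have h1 : -(M * t * r) ≤ Fx * v := by
    have h2 := neg_abs_le (Fx * v)
    rw [abs_mul, hvr] at h2
    nlinarith [mul_le_mul_of_nonneg_right hlip hr.le]
  have hv2 : v ^ 2 = r ^ 2 := by rw [← sq_abs, hvr]
  rw [hv2] at htb
  have hpos : (0:ℝ) ≤ 2 * a + M * r := by nlinarith
  nlinarith [mul_le_mul_of_nonneg_right htδ hpos, mul_pos hc (mul_pos hr hr)]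

theorem saddle_node_aux
    (G : ℝ × ℝ → ℝ) (xs ps : ℝ)
    (hG : ContDiffAt ℝ 2 G (xs, ps))
    (h0 : G (xs, ps) = 0)
    (hGx : deriv (fun x => G (x, ps)) xs = 0)
    (ha : 0 < deriv (fun p => G (xs, p)) ps)
    (hb : 0 < deriv (deriv (fun x => G (x, ps))) xs) :
    ∃ ε > (0:ℝ), ∃ δ > (0:ℝ),
      (∀ p : ℝ, ps < p → p < ps + δ →
        ∀ x : ℝ, |x - xs| < ε → G (x, p) ≠ 0) ∧
      (∀ p : ℝ, ps - δ < p → p < ps →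
        ∃ x₁ x₂ : ℝ, x₁ < x₂ ∧
          x₁ ∈ Set.Ioo (xs - ε) (xs + ε) ∧ x₂ ∈ Set.Ioo (xs - ε) (xs + ε) ∧
          G (x₁, p) = 0 ∧ G (x₂, p) = 0 ∧
          ∀ x ∈ Set.Ioo (xs - ε) (xs + ε), G (x, p) = 0 → x = x₁ ∨ x = x₂) := by
  -- extract regularity on an open set U
  obtain ⟨u, hu, hcd⟩ := hG.contDiffOn (le_refl 2) (by simp)
  obtain ⟨U, hUu, hUopen, hzU⟩ := _root_.mem_nhds_iff.1 hu
  have hcdU : ContDiffOn ℝ 2 G U := hcd.mono hUu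
  have h2 : DifferentiableOn ℝ G U ∧ (1 = (⊤:WithTop ℕ∞) → AnalyticOn ℝ G U) ∧ ContDiffOn ℝ 1 (fderiv ℝ G) U :=
    (contDiffOn_succ_iff_fderiv_of_isOpen hUopen (n := 1)).1 (by exact_mod_cast hcdU)
  have h3 : DifferentiableOn ℝ (fderiv ℝ G) U ∧ _ ∧ ContDiffOn ℝ 0 (fderiv ℝ (fderiv ℝ G)) U :=
    (contDiffOn_succ_iff_fderiv_of_isOpen hUopen (n := 0)).1 (by exact_mod_cast h2.2.2)
  set F := fderiv ℝ G with hF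
  set F2 := fderiv ℝ F with hF2
  have hGcont : ContinuousOn G U := hcdU.continuousOn
  have hFcont : ContinuousOn F U := h2.2.2.continuousOn
  have hF2cont : ContinuousOn F2 U := (contDiffOn_zero).1 h3.2.2
  -- basic HasDerivAt facts
  have hdx : ∀ x p : ℝ, (x, p) ∈ U → HasDerivAt (fun y => G (y, p)) (F (x, p) (1, 0)) x := by
    intro x p hz
    have h1 : HasFDerivAt G (F (x, p)) (x, p) :=
      (h2.1.differentiableAt (hUopen.mem_nhds hz)).hasFDerivAt
    have hcurve : HasDerivAt (fun y : ℝ => (y, p)) ((1 : ℝ), (0 : ℝ)) x :=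
      (hasDerivAt_id x).prodMk (hasDerivAt_const x p)
    exact h1.comp_hasDerivAt x hcurve
  have hdp : ∀ x p : ℝ, (x, p) ∈ U → HasDerivAt (fun q => G (x, q)) (F (x, p) (0, 1)) p := by
    intro x p hz
    have h1 : HasFDerivAt G (F (x, p)) (x, p) :=
      (h2.1.differentiableAt (hUopen.mem_nhds hz)).hasFDerivAt
    have hcurve : HasDerivAt (fun q : ℝ => (x, q)) ((0 : ℝ), (1 : ℝ)) p :=
      (hasDerivAt_const p x).prodMk (hasDerivAt_id p)
    exact h1.comp_hasDerivAt p hcurve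
  have hdxx : ∀ x p : ℝ, (x, p) ∈ U →
      HasDerivAt (fun y => F (y, p) (1, 0)) (F2 (x, p) (1, 0) (1, 0)) x := by
    intro x p hz
    have h1 : HasFDerivAt F (F2 (x, p)) (x, p) :=
      (h3.1.differentiableAt (hUopen.mem_nhds hz)).hasFDerivAt
    have hcurve : HasDerivAt (fun y : ℝ => (y, p)) ((1 : ℝ), (0 : ℝ)) x :=
      (hasDerivAt_id x).prodMk (hasDerivAt_const x p)
    have h4 : HasDerivAt (fun y => F (y, p)) (F2 (x, p) (1, 0)) x :=
      h1.comp_hasDerivAt x hcurve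
    have h5 := h4.clm_apply (hasDerivAt_const x ((1:ℝ), (0:ℝ)))
    simpa using h5
  have hdxp : ∀ p : ℝ, (xs, p) ∈ U →
      HasDerivAt (fun q => F (xs, q) (1, 0)) (F2 (xs, p) (0, 1) (1, 0)) p := by
    intro p hz
    have h1 : HasFDerivAt F (F2 (xs, p)) (xs, p) :=
      (h3.1.differentiableAt (hUopen.mem_nhds hz)).hasFDerivAt
    have hcurve : HasDerivAt (fun q : ℝ => (xs, q)) ((0 : ℝ), (1 : ℝ)) p :=
      (hasDerivAt_const p xs).prodMk (hasDerivAt_id p)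
    have h4 : HasDerivAt (fun q => F (xs, q)) (F2 (xs, p) (0, 1)) p :=
      h1.comp_hasDerivAt p hcurve
    have h5 := h4.clm_apply (hasDerivAt_const p ((1:ℝ), (0:ℝ)))
    simpa using h5
  -- identify hypotheses
  have hGx0 : F (xs, ps) (1, 0) = 0 := by rw [← (hdx xs ps hzU).deriv, hGx]
  have ha' : 0 < F (xs, ps) (0, 1) := by rwa [(hdp xs ps hzU).deriv] at ha
  set a := F (xs, ps) (0, 1) with haDef
  have hb' : 0 < F2 (xs, ps) (1, 0) (1, 0) := by
    have hev : deriv (fun x => G (x, ps)) =ᶠ[nhds xs] fun x => F (x, ps) (1, 0) := by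
      have hcont : Continuous (fun y : ℝ => (y, ps)) := by continuity
      have : ∀ᶠ y in nhds xs, (y, ps) ∈ U := hcont.continuousAt (hUopen.mem_nhds hzU)
      filter_upwards [this] with y hy using (hdx y ps hy).deriv
    rw [hev.deriv_eq, (hdxx xs ps hzU).deriv] at hb
    exact hb
  set b := F2 (xs, ps) (1, 0) (1, 0) with hbDef
  set c := b / 2 with hcDef
  have hc : 0 < c := by positivity
  set M := ‖F2 (xs, ps)‖ + 1 with hMDef
  have hM : 1 ≤ M := by have := norm_nonneg (F2 (xs, ps)); rw [hMDef]; linarith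
  have hM0 : 0 < M := by linarith
  -- select a good closed square around (xs, ps)
  have hVmem : {z : ℝ × ℝ | z ∈ U ∧ c < F2 z (1, 0) (1, 0) ∧ a / 2 < F z (0, 1) ∧
      F z (0, 1) < 2 * a ∧ ‖F2 z‖ ≤ M} ∈ nhds (xs, ps) := by
    have hcF2 : ContinuousAt (fun z => F2 z (1, 0) (1, 0)) (xs, ps) := by
      have := hF2cont.continuousAt (hUopen.mem_nhds hzU)
      exact ((ContinuousLinearMap.apply ℝ ℝ ((1:ℝ),(0:ℝ))).continuous.continuousAt.comp
        (((ContinuousLinearMap.apply ℝ ((ℝ × ℝ) →L[ℝ] ℝ) ((1:ℝ),(0:ℝ))).continuous.continuousAt.comp this)))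
    have hcF : ContinuousAt (fun z => F z (0, 1)) (xs, ps) := by
      have := hFcont.continuousAt (hUopen.mem_nhds hzU)
      exact ((ContinuousLinearMap.apply ℝ ℝ ((0:ℝ),(1:ℝ))).continuous.continuousAt.comp this)
    have hnF2 : ContinuousAt (fun z => ‖F2 z‖) (xs, ps) :=
      (continuous_norm (E := (ℝ × ℝ →L[ℝ] ℝ × ℝ →L[ℝ] ℝ))).continuousAt.comp (hF2cont.continuousAt (hUopen.mem_nhds hzU))
    have e1 : ∀ᶠ z in nhds (xs, ps), c < F2 z (1, 0) (1, 0) :=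
      hcF2 (Ioi_mem_nhds (by rw [hcDef]; linarith))
    have e2 : ∀ᶠ z in nhds (xs, ps), a / 2 < F z (0, 1) :=
      hcF (Ioi_mem_nhds (by linarith))
    have e3 : ∀ᶠ z in nhds (xs, ps), F z (0, 1) < 2 * a :=
      hcF (Iio_mem_nhds (by linarith))
    have e4 : ∀ᶠ z in nhds (xs, ps), ‖F2 z‖ ≤ M :=
      hnF2 (Iic_mem_nhds (by rw [hMDef]; linarith))
    filter_upwards [hUopen.mem_nhds hzU, e1, e2, e3, e4] with z h1 h2 h3 h4 h5
    exact ⟨h1, h2, h3, h4, h5⟩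
  obtain ⟨r, hr, hrball⟩ := (Metric.nhds_basis_closedBall.mem_iff).1 hVmem
  have hmem : ∀ x p : ℝ, |x - xs| ≤ r → |p - ps| ≤ r →
      (x, p) ∈ U ∧ c < F2 (x, p) (1, 0) (1, 0) ∧ a / 2 < F (x, p) (0, 1) ∧
      F (x, p) (0, 1) < 2 * a ∧ ‖F2 (x, p)‖ ≤ M := by
    intro x p hx hp
    apply hrball
    simp only [Metric.mem_closedBall, Prod.dist_eq, Real.dist_eq, max_le_iff]
    exact ⟨hx, hp⟩
  clear hF hF2 haDef hbDef hcDef hMDef hVmem hrball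
  clear_value F2 F a b c M
  have habs : ∀ p : ℝ, p ∈ Icc (ps - r) (ps + r) → |p - ps| ≤ r := by
    intro p hp; rw [abs_le]; constructor <;> [linarith [hp.1]; linarith [hp.2]]
  have hxabs : ∀ x : ℝ, x ∈ Icc (xs - r) (xs + r) → |x - xs| ≤ r := by
    intro x hx; rw [abs_le]; constructor <;> [linarith [hx.1]; linarith [hx.2]]
  have hpsJ : ps ∈ Icc (ps - r) (ps + r) := by constructor <;> linarith
  -- (L2) bounds on G (xs, p)
  have hqmono : StrictMonoOn (fun p => G (xs, p) - a / 2 * (p - ps)) (Icc (ps - r) (ps + r)) := by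
    apply strictMonoOn_of_deriv_pos (convex_Icc _ _)
    · intro p hp
      have hd := (hdp xs p (hmem xs p (by simp [abs_of_nonneg hr.le, hr.le]) (habs p hp)).1)
      exact ((hd.sub (((hasDerivAt_id p).sub_const ps).const_mul (a / 2))).continuousAt).continuousWithinAt
    · intro p hp
      rw [interior_Icc] at hp
      have hpJ : p ∈ Icc (ps - r) (ps + r) := Ioo_subset_Icc_self hp
      have hmm := hmem xs p (by simp [abs_of_nonneg hr.le, hr.le]) (habs p hpJ)
      have hd := (hdp xs p hmm.1).sub (((hasDerivAt_id p).sub_const ps).const_mul (a / 2))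
      simp only [id_eq, Pi.sub_def] at hd
      rw [hd.deriv]
      simp only [mul_one]
      linarith [hmm.2.2.1]
  have hq2anti : StrictAntiOn (fun p => G (xs, p) - 2 * a * (p - ps)) (Icc (ps - r) (ps + r)) := by
    apply strictAntiOn_of_deriv_neg (convex_Icc _ _)
    · intro p hp
      have hd := (hdp xs p (hmem xs p (by simp [abs_of_nonneg hr.le, hr.le]) (habs p hp)).1)
      exact ((hd.sub (((hasDerivAt_id p).sub_const ps).const_mul (2 * a))).continuousAt).continuousWithinAt
    · intro p hp
      rw [interior_Icc] at hp
      have hpJ : p ∈ Icc (ps - r) (ps + r) := Ioo_subset_Icc_self hp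
      have hmm := hmem xs p (by simp [abs_of_nonneg hr.le, hr.le]) (habs p hpJ)
      have hd := (hdp xs p hmm.1).sub (((hasDerivAt_id p).sub_const ps).const_mul (2 * a))
      simp only [id_eq, Pi.sub_def] at hd
      rw [hd.deriv]
      simp only [mul_one]
      linarith [hmm.2.2.2.1]
  have hplow : ∀ p : ℝ, ps < p → p ∈ Icc (ps - r) (ps + r) → a / 2 * (p - ps) < G (xs, p) := by
    intro p hpps hpJ
    have := hqmono hpsJ hpJ hpps
    simp only [sub_self, mul_zero, h0, sub_zero] at this
    linarith
  have hphigh : ∀ p : ℝ, p < ps → p ∈ Icc (ps - r) (ps + r) → G (xs, p) < a / 2 * (p - ps) := by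
    intro p hpps hpJ
    have := hqmono hpJ hpsJ hpps
    simp only [sub_self, mul_zero, h0, sub_zero] at this
    linarith
  have h2a : ∀ p : ℝ, p < ps → p ∈ Icc (ps - r) (ps + r) → 2 * a * (p - ps) < G (xs, p) := by
    intro p hpps hpJ
    have := hq2anti hpJ hpsJ hpps
    simp only [sub_self, mul_zero, h0, sub_zero] at this
    linarith
  -- (L3) Lipschitz bound on the partial x-derivative along the p-direction
  have hLip : ∀ p : ℝ, p ∈ Icc (ps - r) (ps + r) → |F (xs, p) (1, 0)| ≤ M * |p - ps| := by
    intro p hpJ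
    have key := Convex.norm_image_sub_le_of_norm_hasDerivWithin_le
      (f := fun q => F (xs, q) (1, 0)) (f' := fun q => F2 (xs, q) (0, 1) (1, 0)) (C := M)
      (s := Icc (ps - r) (ps + r)) ?_ ?_ (convex_Icc _ _) hpsJ hpJ
    · have key2 : |F (xs, p) (1, 0) - F (xs, ps) (1, 0)| ≤ M * |p - ps| := by
        simpa using key
      rw [hGx0, sub_zero] at key2
      exact key2
    · intro q hq
      exact (hdxp q (hmem xs q (by simp [abs_of_nonneg hr.le, hr.le]) (habs q hq)).1).hasDerivWithinAt
    · intro q hq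
      have hmm := hmem xs q (by simp [abs_of_nonneg hr.le, hr.le]) (habs q hq)
      have h1 : ‖F2 (xs, q) (0, 1) (1, 0)‖ ≤ ‖F2 (xs, q) (0, 1)‖ * ‖((1:ℝ), (0:ℝ))‖ :=
        (F2 (xs, q) (0, 1)).le_opNorm _
      have h2 : ‖F2 (xs, q) (0, 1)‖ ≤ ‖F2 (xs, q)‖ * ‖((0:ℝ), (1:ℝ))‖ :=
        (F2 (xs, q)).le_opNorm _
      have hn1 : ‖((1:ℝ), (0:ℝ))‖ = 1 := by simp [Prod.norm_def]
      have hn2 : ‖((0:ℝ), (1:ℝ))‖ = 1 := by simp [Prod.norm_def]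
      rw [hn1, mul_one] at h1
      rw [hn2, mul_one] at h2
      have := hmm.2.2.2.2
      calc ‖F2 (xs, q) (0, 1) (1, 0)‖ ≤ ‖F2 (xs, q) (0, 1)‖ := h1
        _ ≤ ‖F2 (xs, q)‖ := h2
        _ ≤ M := this
  -- (L1) Taylor-type lower bound in the x-variable
  have htaylor : ∀ p : ℝ, |p - ps| ≤ r → ∀ x ∈ Icc (xs - r) (xs + r),
      G (xs, p) + F (xs, p) (1, 0) * (x - xs) + c / 2 * (x - xs) ^ 2 ≤ G (x, p) := by
    intro p hpr x hxI
    have hxsI : xs ∈ Icc (xs - r) (xs + r) := by constructor <;> linarith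
    have hmemI : ∀ y ∈ Icc (xs - r) (xs + r), (y, p) ∈ U ∧ c < F2 (y, p) (1, 0) (1, 0) := by
      intro y hy
      have := hmem y p (hxabs y hy) hpr
      exact ⟨this.1, this.2.1⟩
    set ψ : ℝ → ℝ := fun y => F (y, p) (1, 0) - F (xs, p) (1, 0) - c * (y - xs) with hψDef
    have hψd : ∀ y ∈ Icc (xs - r) (xs + r), HasDerivAt ψ (F2 (y, p) (1, 0) (1, 0) - c) y := by
      intro y hy
      have hd := ((hdxx y p (hmemI y hy).1).sub_const (F (xs, p) (1, 0))).sub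
        (((hasDerivAt_id y).sub_const xs).const_mul c)
      simp only [id_eq, mul_one] at hd
      exact hd
    have hψmono : StrictMonoOn ψ (Icc (xs - r) (xs + r)) := by
      apply strictMonoOn_of_deriv_pos (convex_Icc _ _)
      · intro y hy; exact (hψd y hy).continuousAt.continuousWithinAt
      · intro y hy
        rw [interior_Icc] at hy
        rw [(hψd y (Ioo_subset_Icc_self hy)).deriv]
        linarith [(hmemI y (Ioo_subset_Icc_self hy)).2]
    have hψ0 : ψ xs = 0 := by simp [hψDef]
    set φ : ℝ → ℝ :=
      fun y => G (y, p) - G (xs, p) - F (xs, p) (1, 0) * (y - xs) - c / 2 * (y - xs) ^ 2 with hφDef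
    have hφd : ∀ y ∈ Icc (xs - r) (xs + r), HasDerivAt φ (ψ y) y := by
      intro y hy
      have hd := (((hdx y p (hmemI y hy).1).sub_const (G (xs, p))).sub
        (((hasDerivAt_id y).sub_const xs).const_mul (F (xs, p) (1, 0)))).sub
        ((((hasDerivAt_id y).sub_const xs).pow 2).const_mul (c / 2))
      simp only [id_eq, Pi.sub_def, Pi.pow_apply] at hd
      refine hd.congr_deriv ?_
      simp only [hψDef]
      ring
    have hφ0 : φ xs = 0 := by simp [hφDef]
    have hkey : 0 ≤ φ x := by
      rcases le_total xs x with hxx | hxx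
      · have hmono : MonotoneOn φ (Icc xs (xs + r)) := by
          apply monotoneOn_of_deriv_nonneg (convex_Icc _ _)
          · intro y hy
            have hyI : y ∈ Icc (xs - r) (xs + r) := ⟨by linarith [hy.1], hy.2⟩
            exact (hφd y hyI).continuousAt.continuousWithinAt
          · intro y hy
            rw [interior_Icc] at hy
            have hyI : y ∈ Icc (xs - r) (xs + r) := ⟨by linarith [hy.1.le], hy.2.le⟩
            exact (hφd y hyI).differentiableAt.differentiableWithinAt
          · intro y hy
            rw [interior_Icc] at hy
            have hyI : y ∈ Icc (xs - r) (xs + r) := ⟨by linarith [hy.1.le], hy.2.le⟩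
            rw [(hφd y hyI).deriv]
            have := hψmono hxsI hyI hy.1
            rw [hψ0] at this
            exact this.le
        have := hmono (⟨le_refl xs, by linarith⟩ : xs ∈ Icc xs (xs + r)) ⟨hxx, hxI.2⟩ hxx
        rw [hφ0] at this
        exact this
      · have hanti : AntitoneOn φ (Icc (xs - r) xs) := by
          apply antitoneOn_of_deriv_nonpos (convex_Icc _ _)
          · intro y hy
            have hyI : y ∈ Icc (xs - r) (xs + r) := ⟨hy.1, by linarith [hy.2]⟩
            exact (hφd y hyI).continuousAt.continuousWithinAt
          · intro y hy
            rw [interior_Icc] at hy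
            have hyI : y ∈ Icc (xs - r) (xs + r) := ⟨hy.1.le, by linarith [hy.2.le]⟩
            exact (hφd y hyI).differentiableAt.differentiableWithinAt
          · intro y hy
            rw [interior_Icc] at hy
            have hyI : y ∈ Icc (xs - r) (xs + r) := ⟨hy.1.le, by linarith [hy.2.le]⟩
            rw [(hφd y hyI).deriv]
            have := hψmono hyI hxsI hy.2
            rw [hψ0] at this
            exact this.le
        have := hanti (⟨hxI.1, hxx⟩ : x ∈ Icc (xs - r) xs) ⟨by linarith, le_refl xs⟩ hxx
        rw [hφ0] at this
        exact this
    have hkey' : 0 ≤ G (x, p) - G (xs, p) - F (xs, p) (1, 0) * (x - xs) - c / 2 * (x - xs) ^ 2 :=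
      hkey
    linarith
  -- choose ε and δ
  have hden : 0 < 2 * a + M * r := by nlinarith
  set δ : ℝ := min r (min (a * c / (2 * M ^ 2)) (c * r ^ 2 / 4 / (2 * a + M * r))) with hδDef
  have hδpos : 0 < δ := by
    apply lt_min hr
    apply lt_min
    · exact div_pos (mul_pos ha' hc) (by positivity)
    · exact div_pos (by positivity) hden
  have hδr : δ ≤ r := min_le_left _ _
  have hδ2 : δ ≤ a * c / (2 * M ^ 2) := le_trans (min_le_right _ _) (min_le_left _ _)
  have hδ3 : δ ≤ c * r ^ 2 / 4 / (2 * a + M * r) := le_trans (min_le_right _ _) (min_le_right _ _)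
  have hδ3' : δ * (2 * a + M * r) ≤ c * r ^ 2 / 4 := by
    rw [le_div_iff₀ hden] at hδ3
    exact hδ3
  refine ⟨r, hr, δ, hδpos, ?_, ?_⟩
  · -- no zeros for ps < p < ps + δ
    intro p hp1 hp2 x hx
    have ht : 0 < p - ps := by linarith
    have htδ : p - ps ≤ δ := by linarith
    have hpr : |p - ps| ≤ r := by rw [abs_of_pos ht]; linarith
    have hxr : |x - xs| ≤ r := hx.le
    have hxI : x ∈ Icc (xs - r) (xs + r) := by
      rcases abs_le.1 hxr with ⟨h1, h2⟩
      constructor <;> linarith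
    have htb := htaylor p hpr x hxI
    have hpl := hplow p hp1 ⟨by linarith, by linarith⟩
    have hlip := hLip p ⟨by linarith, by linarith⟩
    rw [abs_of_pos ht] at hlip
    have habs1 : |F (xs, p) (1, 0) * (x - xs)| ≤ M * (p - ps) * |x - xs| := by
      rw [abs_mul]
      exact mul_le_mul_of_nonneg_right hlip (abs_nonneg _)
    have h1 : -(M * (p - ps) * |x - xs|) ≤ F (xs, p) (1, 0) * (x - xs) := by
      have := neg_abs_le (F (xs, p) (1, 0) * (x - xs))
      linarith
    have hM2 : M ^ 2 * (p - ps) ≤ a * c / 2 := by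
      have h5 : M ^ 2 * (p - ps) ≤ M ^ 2 * δ := by nlinarith
      have h6 : M ^ 2 * (a * c / (2 * M ^ 2)) = a * c / 2 := by
        field_simp
      nlinarith
    exact ne_of_gt (saddle_arith_pos a c M (p - ps) (x - xs) (G (x, p)) (G (xs, p))
      (F (xs, p) (1, 0)) ha' hc ht htb hpl h1 hM2)
  · -- exactly two zeros for ps - δ < p < ps
    intro p hp1 hp2
    have ht : 0 < ps - p := by linarith
    have htδ : ps - p ≤ δ := by linarith
    have hpr : |p - ps| ≤ r := by rw [abs_sub_comm, abs_of_pos ht]; linarith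
    have hpJ : p ∈ Icc (ps - r) (ps + r) := by constructor <;> linarith
    have hlip := hLip p hpJ
    rw [abs_sub_comm, abs_of_pos ht] at hlip
    -- value at the centre
    have hfxs : G (xs, p) < 0 := by
      have h5 := hphigh p hp2 hpJ
      have h6 : a / 2 * (p - ps) < 0 := mul_neg_of_pos_of_neg (by linarith) (by linarith)
      linarith
    have h2a' := h2a p hp2 hpJ
    have hlow : -(2 * a * (ps - p)) < G (xs, p) := by
      have h7 : 2 * a * (p - ps) = -(2 * a * (ps - p)) := by ring
      rw [h7] at h2a'
      exact h2a'
    have htbp := htaylor p hpr (xs + r) ⟨by linarith, le_refl _⟩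
    have htbm := htaylor p hpr (xs - r) ⟨le_refl _, by linarith⟩
    rw [show xs + r - xs = r by ring] at htbp
    rw [show xs - r - xs = -r by ring] at htbm
    have hfplus : 0 < G (xs + r, p) :=
      saddle_arith_endpoint a c M r (ps - p) δ (G (xs, p)) (F (xs, p) (1, 0)) (G (xs + r, p)) r
        (abs_of_pos hr) hc ht htδ hr hM0 ha' htbp hlow hlip hδ3'
    have hfminus : 0 < G (xs - r, p) :=
      saddle_arith_endpoint a c M r (ps - p) δ (G (xs, p)) (F (xs, p) (1, 0)) (G (xs - r, p)) (-r)
        (by rw [abs_neg, abs_of_pos hr]) hc ht htδ hr hM0 ha' htbm hlow hlip hδ3'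
    have hmemx : ∀ x ∈ Icc (xs - r) (xs + r), (x, p) ∈ U ∧ c < F2 (x, p) (1, 0) (1, 0) := by
      intro x hx0
      have := hmem x p (hxabs x hx0) hpr
      exact ⟨this.1, this.2.1⟩
    have fcont : ContinuousOn (fun x => G (x, p)) (Icc (xs - r) (xs + r)) := by
      intro x hx0
      exact ((hdx x p (hmemx x hx0).1).continuousAt).continuousWithinAt
    have hIV1 : (0:ℝ) ∈ (fun x => G (x, p)) '' Ioo (xs - r) xs := by
      apply intermediate_value_Ioo' (by linarith : xs - r ≤ xs)
        (fcont.mono (Icc_subset_Icc (le_refl _) (by linarith)))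
      exact ⟨hfxs, hfminus⟩
    obtain ⟨x₁, hx₁mem, hx₁⟩ := hIV1
    have hIV2 : (0:ℝ) ∈ (fun x => G (x, p)) '' Ioo xs (xs + r) := by
      apply intermediate_value_Ioo (by linarith : xs ≤ xs + r)
        (fcont.mono (Icc_subset_Icc (by linarith) (le_refl _)))
      exact ⟨hfxs, hfplus⟩
    obtain ⟨x₂, hx₂mem, hx₂⟩ := hIV2
    have hx₁big : x₁ ∈ Ioo (xs - r) (xs + r) := ⟨hx₁mem.1, by linarith [hx₁mem.2]⟩
    have hx₂big : x₂ ∈ Ioo (xs - r) (xs + r) := ⟨by linarith [hx₂mem.1], hx₂mem.2⟩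
    have hsm : StrictMonoOn (fun x => F (x, p) (1, 0)) (Icc (xs - r) (xs + r)) := by
      apply strictMonoOn_of_deriv_pos (convex_Icc _ _)
      · intro y hy; exact (hdxx y p (hmemx y hy).1).continuousAt.continuousWithinAt
      · intro y hy
        rw [interior_Icc] at hy
        rw [(hdxx y p (hmemx y (Ioo_subset_Icc_self hy)).1).deriv]
        linarith [(hmemx y (Ioo_subset_Icc_self hy)).2]
    have h3z : ∀ u v w : ℝ, u ∈ Ioo (xs - r) (xs + r) → w ∈ Ioo (xs - r) (xs + r) →
        u < v → v < w → G (u, p) = 0 → G (v, p) = 0 → G (w, p) = 0 → False := by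
      intro u v w hu hw huv hvw hgu hgv hgw
      obtain ⟨ξ₁, hξ₁, hξ₁0⟩ := exists_hasDerivAt_eq_zero (f := fun x => G (x, p))
        (f' := fun x => F (x, p) (1, 0)) huv
        (fcont.mono (Icc_subset_Icc hu.1.le (by linarith [hw.2])))
        (by show G (u, p) = G (v, p); rw [hgu, hgv])
        (fun y hy => hdx y p (hmemx y
          ⟨by linarith [hu.1, hy.1], by linarith [hw.2, hy.2]⟩).1)
      obtain ⟨ξ₂, hξ₂, hξ₂0⟩ := exists_hasDerivAt_eq_zero (f := fun x => G (x, p))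
        (f' := fun x => F (x, p) (1, 0)) hvw
        (fcont.mono (Icc_subset_Icc (by linarith [hu.1]) hw.2.le))
        (by show G (v, p) = G (w, p); rw [hgv, hgw])
        (fun y hy => hdx y p (hmemx y
          ⟨by linarith [hu.1, hy.1], by linarith [hw.2, hy.2]⟩).1)
      have hlt : ξ₁ < ξ₂ := by linarith [hξ₁.2, hξ₂.1]
      have hcontra := hsm
        (⟨by linarith [hξ₁.1, hu.1], by linarith [hξ₁.2, hw.2]⟩ :
          ξ₁ ∈ Icc (xs - r) (xs + r))
        (⟨by linarith [hξ₂.1, hu.1], by linarith [hξ₂.2, hw.2]⟩ :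
          ξ₂ ∈ Icc (xs - r) (xs + r)) hlt
      have hcontra' : F (ξ₁, p) (1, 0) < F (ξ₂, p) (1, 0) := hcontra
      rw [hξ₁0, hξ₂0] at hcontra'
      exact lt_irrefl 0 hcontra'
    refine ⟨x₁, x₂, by linarith [hx₁mem.2, hx₂mem.1], hx₁big, hx₂big, hx₁, hx₂, ?_⟩
    intro x hxmem hfx
    rcases lt_trichotomy x x₁ with hlt | heq | hgt
    · exact ((h3z x x₁ x₂ hxmem hx₂big hlt (by linarith [hx₁mem.2, hx₂mem.1]) hfx hx₁ hx₂)).elim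
    · exact Or.inl heq
    · rcases lt_trichotomy x x₂ with hlt2 | heq2 | hgt2
      · exact ((h3z x₁ x x₂ hx₁big hx₂big hgt hlt2 hx₁ hfx hx₂)).elim
      · exact Or.inr heq2
      · exact ((h3z x₁ x₂ x hx₁big hxmem (by linarith [hx₁mem.2, hx₂mem.1]) hgt2 hx₁ hx₂ hfx)).elim

/-- Saddle-node bifurcation theorem, reversed case (`G_p · G_xx > 0`): no
stationary points near `(xs, ps)` for `p` slightly above `ps`, and exactly two
for `p` slightly below `ps`. -/
theorem saddle_node_reversed_case
    (G : ℝ × ℝ → ℝ) (xs ps : ℝ)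
    (hG : ContDiffAt ℝ 2 G (xs, ps))
    (h0 : G (xs, ps) = 0)
    (hGx : deriv (fun x => G (x, ps)) xs = 0)
    (hGp : deriv (fun p => G (xs, p)) ps ≠ 0)
    (hGxx : deriv (deriv (fun x => G (x, ps))) xs ≠ 0)
    (hsign : deriv (fun p => G (xs, p)) ps *
        deriv (deriv (fun x => G (x, ps))) xs > 0) :
    ∃ ε > (0:ℝ), ∃ δ > (0:ℝ),
      (∀ p : ℝ, ps < p → p < ps + δ →
        ∀ x : ℝ, |x - xs| < ε → G (x, p) ≠ 0) ∧
      (∀ p : ℝ, ps - δ < p → p < ps →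
        ∃ x₁ x₂ : ℝ, x₁ < x₂ ∧
          x₁ ∈ Set.Ioo (xs - ε) (xs + ε) ∧ x₂ ∈ Set.Ioo (xs - ε) (xs + ε) ∧
          G (x₁, p) = 0 ∧ G (x₂, p) = 0 ∧
          ∀ x ∈ Set.Ioo (xs - ε) (xs + ε), G (x, p) = 0 → x = x₁ ∨ x = x₂) := by
  rcases mul_pos_iff.1 hsign with ⟨hap, hbp⟩ | ⟨han, hbn⟩
  · exact saddle_node_aux G xs ps hG h0 hGx hap hbp
  · have hG' : ContDiffAt ℝ 2 (fun z => -G z) (xs, ps) := hG.neg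
    have h0' : (fun z : ℝ × ℝ => -G z) (xs, ps) = 0 := by simp [h0]
    have hGx' : deriv (fun x => (fun z : ℝ × ℝ => -G z) (x, ps)) xs = 0 := by
      show deriv (fun x => -G (x, ps)) xs = 0
      rw [deriv.fun_neg, hGx, neg_zero]
    have ha' : 0 < deriv (fun p => (fun z : ℝ × ℝ => -G z) (xs, p)) ps := by
      show 0 < deriv (fun p => -G (xs, p)) ps
      rw [deriv.fun_neg]
      linarith
    have hb'' : 0 < deriv (deriv (fun x => (fun z : ℝ × ℝ => -G z) (x, ps))) xs := by
      show 0 < deriv (deriv (fun x => -G (x, ps))) xs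
      have e : deriv (fun x => -G (x, ps)) = fun y => -deriv (fun x' => G (x', ps)) y := by
        funext y
        exact deriv.fun_neg
      rw [e, deriv.fun_neg]
      linarith
    obtain ⟨ε, hε, δ, hδ, hpart1, hpart2⟩ :=
      saddle_node_aux (fun z => -G z) xs ps hG' h0' hGx' ha' hb''
    refine ⟨ε, hε, δ, hδ, ?_, ?_⟩
    · intro p hp1 hp2 x hx hzero
      exact hpart1 p hp1 hp2 x hx (by simp [hzero])
    · intro p hp1 hp2
      obtain ⟨x₁, x₂, hlt, hm1, hm2, hz1, hz2, huniq⟩ := hpart2 p hp1 hp2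
      exact ⟨x₁, x₂, hlt, hm1, hm2, by simpa using hz1, by simpa using hz2,
        fun x hx hzx => huniq x hx (by simp [hzx])⟩
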